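/- Let F be a finite field with 16 elements and f a monic irreducible polynomial of degree d over F. Then the ideal ⟨u^i v^j⟩ of the ring (F[x]/⟨f⟩)[u,v]/⟨u^k, v^4⟩ has cardinality 16^{(k−i)(4−j)d}. -/

import Mathlib

open Polynomial

private lemma fin2_ext' {m m' : Fin 2 →₀ ℕ} (h0 : m 0 = m' 0) (h1 : m 1 = m' 1) : m = m' :=
  Finsupp.ext (Fin.forall_fin_two.mpr ⟨h0, h1⟩)

private lemma fin2_le' {m m' : Fin 2 →₀ ℕ} : m ≤ m' ↔ m 0 ≤ m' 0 ∧ m 1 ≤ m' 1 := by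
  rw [Finsupp.le_def, Fin.forall_fin_two]

private lemma fs2_apply (x y : ℕ) :
    ((Finsupp.single (0 : Fin 2) x + Finsupp.single 1 y : Fin 2 →₀ ℕ) 0 = x) ∧
    ((Finsupp.single (0 : Fin 2) x + Finsupp.single 1 y : Fin 2 →₀ ℕ) 1 = y) := by
  constructor <;> simp [Finsupp.single_apply]

attribute [-instance] Ideal.Quotient.commSemiring in
set_option maxHeartbeats 2000000 in
/-- For `F` a field with 16 elements and `f` monic irreducible of degree `d` over `F`,
the ideal `⟨uⁱvʲ⟩` of `(F[x]/⟨f⟩)[u,v]/⟨uᵏ, v⁴⟩` has cardinality `16^((k-i)(4-j)d)`. -/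
theorem stmt8 (F : Type) [Field F] [Fintype F] (hF : Fintype.card F = 16)
    (f : Polynomial F) (hmonic : f.Monic) (hirr : Irreducible f)
    (k i j : ℕ) (hk : 0 < k) (hi : i ≤ k - 1) (hj : j ≤ 3) :
    let S := Polynomial F ⧸ Ideal.span {f}
    let I : Ideal (@MvPolynomial (Fin 2) S CommRing.toCommSemiring ⧸
        Ideal.span {(MvPolynomial.X 0 : @MvPolynomial (Fin 2) S CommRing.toCommSemiring) ^ k, MvPolynomial.X 1 ^ 4}) :=
      Ideal.span {Ideal.Quotient.mk _ (MvPolynomial.X 0 ^ i * MvPolynomial.X 1 ^ j)}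
    Nat.card I = 16 ^ ((k - i) * (4 - j) * f.natDegree) := by
  intro S I
  classical
  have hik : i < k := by omega
  have hj4 : j < 4 := by omega
  set d := f.natDegree with hd
  -- S is a finite field of cardinality 16 ^ d
  haveI := Fact.mk hirr
  haveI : Ideal.IsMaximal (Ideal.span {f}) :=
    PrincipalIdealRing.isMaximal_of_irreducible hirr
  let B : Module.Basis (Fin d) F S := AdjoinRoot.powerBasisAux' hmonic
  haveI : Fintype S := Module.fintypeOfFintype B
  have hcardS : Fintype.card S = 16 ^ d := by
    rw [Module.card_fintype B, hF, Fintype.card_fin]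
  -- notation
  let J : Ideal (MvPolynomial (Fin 2) S) :=
    Ideal.span {(MvPolynomial.X 0 : MvPolynomial (Fin 2) S) ^ k, MvPolynomial.X 1 ^ 4}
  let mk := Ideal.Quotient.mk J
  let μ : Fin (k - i) → Fin (4 - j) → (Fin 2 →₀ ℕ) := fun a b =>
    Finsupp.single 0 (i + a) + Finsupp.single 1 (j + b)
  let ν : Fin (k - i) → Fin (4 - j) → (Fin 2 →₀ ℕ) := fun a b =>
    Finsupp.single 0 (a : ℕ) + Finsupp.single 1 (b : ℕ)
  let P : (Fin (k - i) × Fin (4 - j) → S) → MvPolynomial (Fin 2) S := fun c =>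
    ∑ a, ∑ b, MvPolynomial.monomial (μ a b) (c (a, b))
  have hgen : (MvPolynomial.X 0 : MvPolynomial (Fin 2) S) ^ i * MvPolynomial.X 1 ^ j
      = MvPolynomial.monomial (Finsupp.single 0 i + Finsupp.single 1 j) 1 := by
    rw [MvPolynomial.X_pow_eq_monomial, MvPolynomial.X_pow_eq_monomial,
      MvPolynomial.monomial_mul, one_mul]
  -- membership in J
  have hJ : ∀ p : MvPolynomial (Fin 2) S, p ∈ J ↔
      ∀ m ∈ p.support, k ≤ m 0 ∨ 4 ≤ m 1 := by
    intro p
    have hset : ({(MvPolynomial.X 0 : MvPolynomial (Fin 2) S) ^ k, MvPolynomial.X 1 ^ 4} : Set _)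
        = (fun s => MvPolynomial.monomial s (1 : S)) ''
          {Finsupp.single 0 k, Finsupp.single 1 4} := by
      simp [Set.image_insert_eq, MvPolynomial.X_pow_eq_monomial]
    show p ∈ Ideal.span _ ↔ _
    rw [hset, MvPolynomial.mem_ideal_span_monomial_image]
    refine forall₂_congr fun m hm => ?_
    simp [Finsupp.single_le_iff]
  -- coefficients of P
  have hcoeffP : ∀ c m, MvPolynomial.coeff m (P c) =
      ∑ a, ∑ b, if μ a b = m then c (a, b) else 0 := by
    intro c m
    simp [P, MvPolynomial.coeff_sum, MvPolynomial.coeff_monomial]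
  have hμeq : ∀ a b a' b', μ a b = μ a' b' ↔ (a = a' ∧ b = b') := by
    intro a b a' b'
    constructor
    · intro h
      have h0 := congrArg (fun m : Fin 2 →₀ ℕ => m 0) h
      have h1 := congrArg (fun m : Fin 2 →₀ ℕ => m 1) h
      simp only [μ, (fs2_apply _ _).1, (fs2_apply _ _).2] at h0 h1
      exact ⟨Fin.ext (by omega), Fin.ext (by omega)⟩
    · rintro ⟨rfl, rfl⟩; rfl
  have hcoeff1 : ∀ c a b, MvPolynomial.coeff (μ a b) (P c) = c (a, b) := by
    intro c a b
    rw [hcoeffP]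
    rw [Finset.sum_eq_single a]
    · rw [Finset.sum_eq_single b]
      · rw [if_pos rfl]
      · intro b' _ hb'
        rw [if_neg]
        intro h
        exact hb' ((hμeq _ _ _ _).mp h).2
      · simp
    · intro a' _ ha'
      apply Finset.sum_eq_zero
      intro b' _
      rw [if_neg]
      intro h
      exact ha' ((hμeq _ _ _ _).mp h).1
    · simp
  have hsuppP : ∀ c m, MvPolynomial.coeff m (P c) ≠ 0 → ∃ a b, m = μ a b := by
    intro c m hne
    by_contra h
    push_neg at h
    apply hne
    rw [hcoeffP]
    apply Finset.sum_eq_zero; intro a _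
    apply Finset.sum_eq_zero; intro b _
    exact if_neg fun he => h a b he.symm
  -- P c lies in the ideal generated by X0^i X1^j
  have hfactor : ∀ c, P c = ((MvPolynomial.X 0 : MvPolynomial (Fin 2) S) ^ i
      * MvPolynomial.X 1 ^ j) * (∑ a, ∑ b, MvPolynomial.monomial (ν a b) (c (a, b))) := by
    intro c
    rw [Finset.mul_sum]
    apply Finset.sum_congr rfl; intro a _
    rw [Finset.mul_sum]
    apply Finset.sum_congr rfl; intro b _
    rw [hgen, MvPolynomial.monomial_mul, one_mul]
    have heq : μ a b = ((Finsupp.single 0 i + Finsupp.single 1 j) + ν a b) := by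
      apply fin2_ext' <;>
        simp only [μ, ν, Finsupp.add_apply, (fs2_apply _ _).1, (fs2_apply _ _).2]
    rw [heq]
  have hmemI : ∀ c, mk (P c) ∈ I := by
    intro c
    rw [hfactor c, map_mul]
    exact Ideal.mul_mem_right _ _ (Ideal.subset_span (Set.mem_singleton _))
  have hPsub : ∀ c c', P c - P c' = P (c - c') := by
    intro c c'
    simp only [P, ← Finset.sum_sub_distrib, ← map_sub, Pi.sub_apply]
  have hPzero : ∀ c, P c ∈ J → c = 0 := by
    intro c hc
    funext x
    obtain ⟨a, b⟩ := x
    by_contra hne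
    have hsupp : μ a b ∈ (P c).support := by
      rw [MvPolynomial.mem_support_iff, hcoeff1]
      exact hne
    have h0 : (μ a b) 0 = i + a := (fs2_apply _ _).1
    have h1 : (μ a b) 1 = j + b := (fs2_apply _ _).2
    have ha := a.isLt
    have hb := b.isLt
    rcases (hJ _).mp hc _ hsupp with h | h <;> omega
  let T := Fin (k - i) × Fin (4 - j) → S
  let Φ : T → I := fun c => ⟨mk (P c), hmemI c⟩
  have hinj : Function.Injective Φ := by
    intro c c' h
    have h2 : mk (P c) = mk (P c') := congrArg Subtype.val h
    have h3 : P c - P c' ∈ J := Ideal.Quotient.eq.mp h2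
    rw [hPsub] at h3
    exact sub_eq_zero.mp (hPzero _ h3)
  have hsurj : Function.Surjective Φ := by
    rintro ⟨z, hz⟩
    have hz' : ∃ y, y * mk ((MvPolynomial.X 0 : MvPolynomial (Fin 2) S) ^ i
        * MvPolynomial.X 1 ^ j) = z := Ideal.mem_span_singleton'.mp hz
    obtain ⟨y, hy⟩ := hz'
    obtain ⟨q, hq⟩ := Ideal.Quotient.mk_surjective y
    let c : T := fun x => MvPolynomial.coeff (ν x.1 x.2) q
    refine ⟨c, Subtype.ext (?_ : mk (P c) = z)⟩
    rw [← hy, ← hq, ← map_mul]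
    apply Ideal.Quotient.eq.mpr
    rw [hJ]
    intro m hm
    by_contra hcon
    push_neg at hcon
    obtain ⟨hm0, hm1⟩ := hcon
    rw [MvPolynomial.mem_support_iff] at hm
    apply hm
    rw [MvPolynomial.coeff_sub, hgen, MvPolynomial.coeff_mul_monomial']
    have hsh0 : ((Finsupp.single 0 i + Finsupp.single 1 j : Fin 2 →₀ ℕ)) 0 = i :=
      (fs2_apply _ _).1
    have hsh1 : ((Finsupp.single 0 i + Finsupp.single 1 j : Fin 2 →₀ ℕ)) 1 = j :=
      (fs2_apply _ _).2
    by_cases hle : (Finsupp.single 0 i + Finsupp.single 1 j : Fin 2 →₀ ℕ) ≤ m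
    · rw [if_pos hle, mul_one]
      obtain ⟨hle0, hle1⟩ := fin2_le'.mp hle
      rw [hsh0] at hle0
      rw [hsh1] at hle1
      set a : Fin (k - i) := ⟨m 0 - i, by omega⟩ with hadef
      set b : Fin (4 - j) := ⟨m 1 - j, by omega⟩ with hbdef
      have hmab : m = μ a b := by
        apply fin2_ext'
        · rw [(fs2_apply _ _).1]; show m 0 = i + (m 0 - i); omega
        · rw [(fs2_apply _ _).2]; show m 1 = j + (m 1 - j); omega
      have hmsub : m - (Finsupp.single 0 i + Finsupp.single 1 j) = ν a b := by
        apply fin2_ext'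
        · rw [Finsupp.tsub_apply, hsh0, (fs2_apply _ _).1]
        · rw [Finsupp.tsub_apply, hsh1, (fs2_apply _ _).2]
      rw [hmab, hcoeff1, ← hmab, hmsub]
      exact sub_self _
    · rw [if_neg hle, sub_zero]
      by_contra hne
      obtain ⟨a, b, rfl⟩ := hsuppP _ _ hne
      apply hle
      apply fin2_le'.mpr
      rw [hsh0, hsh1, (fs2_apply _ _).1, (fs2_apply _ _).2]
      omega
  have hcard : Nat.card T = Nat.card I := Nat.card_eq_of_bijective Φ ⟨hinj, hsurj⟩
  rw [← hcard, Nat.card_eq_fintype_card]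
  rw [show (T = ((Fin (k - i) × Fin (4 - j)) → S)) from rfl] at *
  rw [Fintype.card_fun, hcardS, Fintype.card_prod, Fintype.card_fin, Fintype.card_fin,
    ← pow_mul]
  congr 1
  ring
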